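/- Let x ↦ Λ(x) ∈ ℂ² ⊗ H be a differentiable family of unit vectors with D_x Λ(x) = 0 for x on a surface parametrized by coordinates (s¹,s²), D_x = Σ_i σ_i ⊗ (Xⁱ − xⁱ). Then the symmetrized quantity (1/2)(⟨∂_a Λ, D_x² ∂_b Λ⟩ + ⟨∂_b Λ, D_x² ∂_a Λ⟩) equals the induced Euclidean metric γ_{ab} = Σ_i (∂xⁱ/∂s^a)(∂xⁱ/∂s^b). -/

import Mathlib

open Matrix

noncomputable section

def pauli : Fin 3 → Matrix (Fin 2) (Fin 2) ℂ :=
  ![!![0, 1; 1, 0], !![0, -Complex.I; Complex.I, 0], !![1, 0; 0, -1]]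

lemma pauli_herm (i : Fin 3) : (pauli i)ᴴ = pauli i := by
  fin_cases i <;> ext j k <;> fin_cases j <;> fin_cases k <;>
    simp [pauli, Matrix.conjTranspose_apply]

lemma pauli_anticomm (i j : Fin 3) :
    pauli i * pauli j + pauli j * pauli i
      = ((if i = j then 2 else 0 : ℂ)) • (1 : Matrix (Fin 2) (Fin 2) ℂ) := by
  fin_cases i <;> fin_cases j <;> ext p q <;> fin_cases p <;> fin_cases q <;>
    simp [pauli, Matrix.mul_apply, Fin.sum_univ_two, Complex.I_mul_I, Matrix.one_apply] <;> norm_num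

variable {H : Type*} [NormedAddCommGroup H] [InnerProductSpace ℂ H] [CompleteSpace H]

def kron (σ : Matrix (Fin 2) (Fin 2) ℂ) (T : H →L[ℂ] H) :
    Matrix (Fin 2) (Fin 2) (H →L[ℂ] H) :=
  Matrix.of fun j k => σ j k • T

def mapp (M : Matrix (Fin 2) (Fin 2) (H →L[ℂ] H)) (v : PiLp 2 fun _ : Fin 2 => H) :
    PiLp 2 fun _ : Fin 2 => H :=
  WithLp.toLp 2 (fun j => ∑ k, M j k (v k))

lemma mapp_mul (M N : Matrix (Fin 2) (Fin 2) (H →L[ℂ] H)) (v : PiLp 2 fun _ : Fin 2 => H) :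
    mapp (M * N) v = mapp M (mapp N v) := by
  ext j
  simp only [mapp, PiLp.toLp_apply, Matrix.mul_apply, ContinuousLinearMap.sum_apply,
    ContinuousLinearMap.mul_apply, map_sum]
  rw [Finset.sum_comm]

lemma kron_mul_one (σ τ : Matrix (Fin 2) (Fin 2) ℂ) :
    kron σ (1 : H →L[ℂ] H) * kron τ 1 = kron (σ * τ) 1 := by
  ext j k
  simp only [kron, Matrix.mul_apply, Matrix.of_apply, Fin.sum_univ_two,
    smul_mul_smul_comm, one_mul, add_smul, Matrix.add_apply]

lemma mapp_add (M N : Matrix (Fin 2) (Fin 2) (H →L[ℂ] H)) (v : PiLp 2 fun _ : Fin 2 => H) :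
    mapp (M + N) v = mapp M v + mapp N v := by
  ext j
  simp only [mapp, PiLp.toLp_apply, Matrix.add_apply, ContinuousLinearMap.add_apply, Finset.sum_add_distrib]
  rfl

lemma mapp_zero (v : PiLp 2 fun _ : Fin 2 => H) :
    mapp (0 : Matrix (Fin 2) (Fin 2) (H →L[ℂ] H)) v = 0 := by
  ext j
  simp only [mapp, PiLp.toLp_apply, Matrix.zero_apply, ContinuousLinearMap.zero_apply, Finset.sum_const_zero]
  rfl

lemma mapp_sum {ι : Type*} (s : Finset ι) (M : ι → Matrix (Fin 2) (Fin 2) (H →L[ℂ] H))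
    (v : PiLp 2 fun _ : Fin 2 => H) :
    mapp (∑ i ∈ s, M i) v = ∑ i ∈ s, mapp (M i) v := by
  induction s using Finset.cons_induction with
  | empty => simp [mapp_zero]
  | cons i s hi ih => simp [Finset.sum_cons, mapp_add, ih]

lemma mapp_smulM (c : ℂ) (M : Matrix (Fin 2) (Fin 2) (H →L[ℂ] H))
    (v : PiLp 2 fun _ : Fin 2 => H) :
    mapp (c • M) v = c • mapp M v := by
  ext j
  simp only [mapp, PiLp.toLp_apply, Matrix.smul_apply, ContinuousLinearMap.smul_apply, ← Finset.smul_sum]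
  rfl

lemma mapp_smul_one (c : ℂ) (v : PiLp 2 fun _ : Fin 2 => H) :
    mapp (kron (c • (1 : Matrix (Fin 2) (Fin 2) ℂ)) 1) v = c • v := by
  ext j
  show ∑ k, (Matrix.of fun j k => (c • (1:Matrix (Fin 2) (Fin 2) ℂ)) j k • (1:H →L[ℂ] H)) j k (v k) = c • v j
  simp [Matrix.one_apply, apply_ite (fun z : ℂ => z • (1:H →L[ℂ] H)),
    apply_ite (fun T : H →L[ℂ] H => T (v _))]
  fin_cases j <;> simp

lemma inner_mapp_self (σ : Matrix (Fin 2) (Fin 2) ℂ) (hσ : σᴴ = σ) (T : H →L[ℂ] H)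
    (hT : IsSelfAdjoint T) (u v : PiLp 2 fun _ : Fin 2 => H) :
    (inner ℂ u (mapp (kron σ T) v) : ℂ) = inner ℂ (mapp (kron σ T) u) v := by
  simp only [mapp, PiLp.toLp_apply, kron, Matrix.of_apply, PiLp.inner_apply, ContinuousLinearMap.coe_smul',
    Pi.smul_apply, inner_sum, sum_inner, inner_smul_left, inner_smul_right]
  rw [Finset.sum_comm]
  refine Finset.sum_congr rfl fun j _ => Finset.sum_congr rfl fun k _ => ?_
  have h1 : (starRingEnd ℂ) (σ j k) = σ k j := by
    conv_rhs => rw [← hσ]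
    simp [Matrix.conjTranspose_apply]
  have h2 := hT.isSymmetric (u k) (v j)
  simp only [ContinuousLinearMap.coe_coe] at h2
  rw [h1, ← h2]

lemma kron_add (σ τ : Matrix (Fin 2) (Fin 2) ℂ) (T : H →L[ℂ] H) :
    kron (σ + τ) T = kron σ T + kron τ T := by
  ext j k; simp [kron, add_smul]

lemma key_inner (Λ₀ : PiLp 2 fun _ : Fin 2 => H) (hn : (inner ℂ Λ₀ Λ₀ : ℂ) = 1) (i j : Fin 3) :
    (inner ℂ (mapp (kron (pauli i) 1) Λ₀) (mapp (kron (pauli j) 1) Λ₀) : ℂ)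
      + inner ℂ (mapp (kron (pauli j) 1) Λ₀) (mapp (kron (pauli i) 1) Λ₀)
    = if i = j then 2 else 0 := by
  rw [← inner_mapp_self (pauli i) (pauli_herm i) 1 (IsSelfAdjoint.one _) Λ₀ _,
      ← inner_mapp_self (pauli j) (pauli_herm j) 1 (IsSelfAdjoint.one _) Λ₀ _,
      ← mapp_mul, ← mapp_mul, kron_mul_one, kron_mul_one, ← inner_add_right,
      ← mapp_add, ← kron_add, pauli_anticomm, mapp_smul_one, inner_smul_right, hn, mul_one]

def mappL (M : Matrix (Fin 2) (Fin 2) (H →L[ℂ] H)) :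
    (PiLp 2 fun _ : Fin 2 => H) →L[ℂ] PiLp 2 fun _ : Fin 2 => H :=
  ((PiLp.continuousLinearEquiv 2 ℂ (fun _ : Fin 2 => H)).symm :
      (∀ _ : Fin 2, H) →L[ℂ] PiLp 2 fun _ : Fin 2 => H) ∘L
    (ContinuousLinearMap.pi fun j => ∑ k, (M j k) ∘L ContinuousLinearMap.proj k) ∘L
    ((PiLp.continuousLinearEquiv 2 ℂ (fun _ : Fin 2 => H)) :
      (PiLp 2 fun _ : Fin 2 => H) →L[ℂ] ∀ _ : Fin 2, H)

lemma mappL_apply (M : Matrix (Fin 2) (Fin 2) (H →L[ℂ] H)) (v : PiLp 2 fun _ : Fin 2 => H) :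
    mappL M v = mapp M v := by
  ext j
  simp [mappL, mapp, PiLp.toLp_apply, PiLp.continuousLinearEquiv, ContinuousLinearMap.proj,
    ContinuousLinearMap.sum_apply]
  rfl

lemma kron_decomp (σ : Matrix (Fin 2) (Fin 2) ℂ) (T : H →L[ℂ] H) (c₀ c₁ : ℂ) :
    kron σ (T - c₁ • 1) = kron σ (T - c₀ • 1) + (c₀ - c₁) • kron σ 1 := by
  ext j k
  simp only [kron, Matrix.add_apply, Matrix.smul_apply, Matrix.of_apply,
    smul_sub, smul_smul]
  have h : (c₀ - c₁) * σ j k = σ j k * c₀ - σ j k * c₁ := by ring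
  rw [h, sub_smul]
  abel

lemma decomp (X : Fin 3 → H →L[ℂ] H) (x₀ x₁ : Fin 3 → ℝ) (v : PiLp 2 fun _ : Fin 2 => H) :
    mapp (∑ i, kron (pauli i) (X i - ((x₁ i : ℝ) : ℂ) • 1)) v
      = mapp (∑ i, kron (pauli i) (X i - ((x₀ i : ℝ) : ℂ) • 1)) v
        + ∑ i, (((x₀ i - x₁ i : ℝ)) : ℂ) • mapp (kron (pauli i) 1) v := by
  rw [mapp_sum, mapp_sum, ← Finset.sum_add_distrib]
  refine Finset.sum_congr rfl fun i _ => ?_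
  rw [kron_decomp (pauli i) (X i) ((x₀ i : ℝ) : ℂ) ((x₁ i : ℝ) : ℂ), mapp_add, mapp_smulM]
  push_cast
  ring_nf

lemma deriv_ker (X : Fin 3 → H →L[ℂ] H) (x : (Fin 2 → ℝ) → Fin 3 → ℝ)
    (Λ : (Fin 2 → ℝ) → PiLp 2 fun _ : Fin 2 => H) (s₀ : Fin 2 → ℝ)
    (dxa : Fin 3 → ℝ) (dΛa : PiLp 2 fun _ : Fin 2 => H) (c : ℝ → Fin 2 → ℝ)
    (hc0 : c 0 = s₀)
    (hx : ∀ i, HasDerivAt (fun t => x (c t) i) (dxa i) 0)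
    (hΛ : HasDerivAt (fun t => Λ (c t)) dΛa 0)
    (hker : ∀ s, mapp (∑ i, kron (pauli i) (X i - (x s i : ℂ) • 1)) (Λ s) = 0) :
    mapp (∑ i, kron (pauli i) (X i - (x s₀ i : ℂ) • 1)) dΛa
      = ∑ i, ((dxa i : ℝ) : ℂ) • mapp (kron (pauli i) 1) (Λ s₀) := by
  set D₀ : Matrix (Fin 2) (Fin 2) (H →L[ℂ] H) :=
    ∑ i, kron (pauli i) (X i - (x s₀ i : ℂ) • 1) with hD₀
  set G : ℝ → PiLp 2 fun _ : Fin 2 => H := fun t =>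
    mappL D₀ (Λ (c t)) + ∑ i, (((x s₀ i : ℝ) : ℂ) - ((x (c t) i : ℝ) : ℂ)) •
      mappL (kron (pauli i) 1) (Λ (c t)) with hG
  have hG0 : G = fun _ => 0 := by
    funext t
    have h := hker (c t)
    rw [decomp X (x s₀) (x (c t)) (Λ (c t))] at h
    simpa [hG, hD₀, mappL_apply, Complex.ofReal_sub] using h
  have hd1 : HasDerivAt (fun t => mappL D₀ (Λ (c t))) (mappL D₀ dΛa) 0 := by
    simpa [Function.comp_def] using
      (((mappL D₀).restrictScalars ℝ).hasFDerivAt (x := Λ (c 0))).comp_hasDerivAt 0 hΛ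
  have hxi : ∀ i, HasDerivAt (fun t => ((x (c t) i : ℝ) : ℂ)) ((dxa i : ℝ) : ℂ) 0 := fun i => by
    simpa [Function.comp_def] using
      ((Complex.ofRealCLM.restrictScalars ℝ).hasFDerivAt (x := x (c 0) i)).comp_hasDerivAt 0 (hx i)
  have hsi : ∀ i, HasDerivAt (fun t => ((x s₀ i : ℝ) : ℂ) - ((x (c t) i : ℝ) : ℂ))
      (-((dxa i : ℝ) : ℂ)) 0 := fun i => by
    simpa using (hasDerivAt_const (0:ℝ) ((x s₀ i : ℝ) : ℂ)).fun_sub (hxi i)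
  have hvi : ∀ i, HasDerivAt (fun t => mappL (kron (pauli i) 1) (Λ (c t)))
      (mappL (kron (pauli i) 1) dΛa) 0 := fun i => by
    simpa [Function.comp_def] using
      (((mappL (kron (pauli i) 1)).restrictScalars ℝ).hasFDerivAt (x := Λ (c 0))).comp_hasDerivAt 0 hΛ
  have hterm : ∀ i, HasDerivAt
      (fun t => (((x s₀ i : ℝ) : ℂ) - ((x (c t) i : ℝ) : ℂ)) •
        mappL (kron (pauli i) 1) (Λ (c t)))
      (-(((dxa i : ℝ) : ℂ)) • mappL (kron (pauli i) 1) (Λ s₀)) 0 := fun i => by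
    have := (hsi i).fun_smul (hvi i)
    simpa [hc0] using this
  have hG' : HasDerivAt G
      (mappL D₀ dΛa + ∑ i, -(((dxa i : ℝ) : ℂ)) • mappL (kron (pauli i) 1) (Λ s₀)) 0 := by
    exact hd1.add (HasDerivAt.fun_sum fun i _ => hterm i)
  have hzero : HasDerivAt G 0 0 := by
    rw [hG0]; exact hasDerivAt_const 0 0
  have huniq := hG'.unique hzero
  have : mappL D₀ dΛa = ∑ i, ((dxa i : ℝ) : ℂ) • mappL (kron (pauli i) 1) (Λ s₀) := by
    have h2 : mappL D₀ dΛa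
        = -∑ i, -(((dxa i : ℝ) : ℂ)) • mappL (kron (pauli i) 1) (Λ s₀) := by
      rw [eq_neg_iff_add_eq_zero]; exact huniq
    rw [h2, ← Finset.sum_neg_distrib]
    simp
  rw [← mappL_apply, this]
  refine Finset.sum_congr rfl fun i _ => ?_
  rw [mappL_apply]

/-- For a two-parameter differentiable family s ↦ x(s) ∈ M_Λ with unit
kernel vectors Λ(x(s)) of D_x = Σᵢ σᵢ ⊗ (Xⁱ − xⁱ), the symmetrization
(1/2)(⟨∂ₐΛ, D² ∂_bΛ⟩ + ⟨∂_bΛ, D² ∂ₐΛ⟩) equals the induced Euclidean metric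
γ_{ab} = Σᵢ (∂ₐxⁱ)(∂_bxⁱ). -/
theorem stmt10 (X : Fin 3 → H →L[ℂ] H) (hX : ∀ i, IsSelfAdjoint (X i))
    (x : (Fin 2 → ℝ) → Fin 3 → ℝ) (Λ : (Fin 2 → ℝ) → PiLp 2 fun _ : Fin 2 => H)
    (s₀ : Fin 2 → ℝ) (dx : Fin 2 → Fin 3 → ℝ) (dΛ : Fin 2 → PiLp 2 fun _ : Fin 2 => H)
    (hx : ∀ a i, HasDerivAt (fun t : ℝ => x (s₀ + t • (Pi.single a 1 : Fin 2 → ℝ)) i) (dx a i) 0)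
    (hΛ : ∀ a, HasDerivAt (fun t : ℝ => Λ (s₀ + t • (Pi.single a 1 : Fin 2 → ℝ))) (dΛ a) 0)
    (hnorm : ∀ s, ‖Λ s‖ = 1)
    (hker : ∀ s, mapp (∑ i, kron (pauli i) (X i - (x s i : ℂ) • 1)) (Λ s) = 0) :
    ∀ a b : Fin 2,
      let D : Matrix (Fin 2) (Fin 2) (H →L[ℂ] H) :=
        ∑ i, kron (pauli i) (X i - (x s₀ i : ℂ) • 1)
      (1 / 2 : ℂ) * ((inner ℂ (dΛ a) (mapp (D * D) (dΛ b)) : ℂ)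
          + (inner ℂ (dΛ b) (mapp (D * D) (dΛ a)) : ℂ))
        = ∑ i, ((dx a i : ℝ) : ℂ) * ((dx b i : ℝ) : ℂ) := by
  intro a b
  intro D
  have hc0 : ∀ e : Fin 2, (fun t : ℝ => s₀ + t • (Pi.single e 1 : Fin 2 → ℝ)) 0 = s₀ := by
    intro e; simp
  -- the differentiated kernel identity
  have hD : ∀ e : Fin 2, mapp D (dΛ e)
      = ∑ i, ((dx e i : ℝ) : ℂ) • mapp (kron (pauli i) 1) (Λ s₀) := by
    intro e
    exact deriv_ker X x Λ s₀ (dx e) (dΛ e) _ (hc0 e) (hx e) (hΛ e) hker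
  -- self-adjointness of D
  have hTsa : ∀ i, IsSelfAdjoint (X i - (x s₀ i : ℂ) • (1 : H →L[ℂ] H)) := by
    intro i
    refine (hX i).sub ?_
    have : star ((x s₀ i : ℂ) • (1 : H →L[ℂ] H)) = (x s₀ i : ℂ) • (1 : H →L[ℂ] H) := by
      rw [star_smul, star_one, Complex.star_def, Complex.conj_ofReal]
    exact this
  have hDsa : ∀ u v : PiLp 2 fun _ : Fin 2 => H,
      (inner ℂ u (mapp D v) : ℂ) = inner ℂ (mapp D u) v := by
    intro u v
    show (inner ℂ u (mapp (∑ i, kron (pauli i) (X i - (x s₀ i : ℂ) • 1)) v) : ℂ) = _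
    rw [mapp_sum, mapp_sum, inner_sum, sum_inner]
    exact Finset.sum_congr rfl fun i _ =>
      inner_mapp_self (pauli i) (pauli_herm i) _ (hTsa i) u v
  have hn : (inner ℂ (Λ s₀) (Λ s₀) : ℂ) = 1 := by
    rw [inner_self_eq_norm_sq_to_K, hnorm s₀]
    norm_num
  set G : Fin 3 → Fin 3 → ℂ := fun i j =>
    inner ℂ (mapp (kron (pauli i) 1) (Λ s₀)) (mapp (kron (pauli j) 1) (Λ s₀)) with hGdef
  have hterm : ∀ e f : Fin 2, (inner ℂ (dΛ e) (mapp (D * D) (dΛ f)) : ℂ)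
      = ∑ i, ∑ j, ((dx e i : ℝ) : ℂ) * (((dx f j : ℝ) : ℂ) * G i j) := by
    intro e f
    rw [mapp_mul, hDsa, hD e, hD f]
    simp only [sum_inner, inner_sum, inner_smul_left, inner_smul_right, Complex.conj_ofReal,
      hGdef, Finset.mul_sum]
    rw [Finset.sum_comm]
    exact Finset.sum_congr rfl fun i _ => Finset.sum_congr rfl fun j _ => by ring
  rw [hterm a b, hterm b a]
  have h2 : (∑ i, ∑ j, ((dx b i : ℝ) : ℂ) * (((dx a j : ℝ) : ℂ) * G i j))
      = ∑ i, ∑ j, ((dx a i : ℝ) : ℂ) * (((dx b j : ℝ) : ℂ) * G j i) := by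
    rw [Finset.sum_comm]
    exact Finset.sum_congr rfl fun i _ => Finset.sum_congr rfl fun j _ => by ring
  rw [h2, ← Finset.sum_add_distrib, Finset.mul_sum]
  refine Finset.sum_congr rfl fun i _ => ?_
  rw [← Finset.sum_add_distrib, Finset.mul_sum]
  have h3 : ∀ j : Fin 3,
      (1 / 2 : ℂ) * (((dx a i : ℝ) : ℂ) * (((dx b j : ℝ) : ℂ) * G i j)
        + ((dx a i : ℝ) : ℂ) * (((dx b j : ℝ) : ℂ) * G j i))
      = if i = j then ((dx a i : ℝ) : ℂ) * ((dx b j : ℝ) : ℂ) else 0 := by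
    intro j
    have hk := key_inner (Λ s₀) hn i j
    rw [hGdef] at *
    calc (1 / 2 : ℂ) * (((dx a i : ℝ) : ℂ) * (((dx b j : ℝ) : ℂ) * G i j)
        + ((dx a i : ℝ) : ℂ) * (((dx b j : ℝ) : ℂ) * G j i))
        = (1 / 2 : ℂ) * (((dx a i : ℝ) : ℂ) * ((dx b j : ℝ) : ℂ) * (G i j + G j i)) := by
          ring
      _ = _ := by
          rw [hk]
          split_ifs <;> ring
  rw [Finset.sum_congr rfl fun j _ => h3 j]
  simp

end
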